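/- Let k > 1 be a real number and set λ = (k+1)/(k−1). Define f_k : [1,∞) → ℝ by f_k(ν) = (ν+1)^{k+1}(λν+1)^{−k} − (ν−1)^{k+1}(λν−1)^{−k} (real powers, with (ν−1)^{k+1} = 0 at ν = 1). Then f_k is strictly monotonically increasing on [1,∞), and consequently its minimum over [1,∞) is attained at ν = 1 with value f_k(1) = 2((k−1)/k)^k. -/

import Mathlib

open Real Set

lemma fk_artanh_bound {t : ℝ} (ht0 : 0 < t) (ht1 : t < 1) :
    Real.log (1+t) - Real.log (1-t) < 2*t/(1-t^2) := by
  set u : ℝ → ℝ := fun s => 2*s/(1-s^2) - (Real.log (1+s) - Real.log (1-s)) with hu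
  have key : ∀ s ∈ Set.Ico (0:ℝ) 1, HasDerivAt u (4*s^2/(1-s^2)^2) s := by
    intro s hs
    have hs0 : (0:ℝ) ≤ s := hs.1
    have hs1 : s < 1 := hs.2
    have h1p : (0:ℝ) < 1 + s := by linarith
    have h1m : (0:ℝ) < 1 - s := by linarith
    have hden : (1 - s^2) ≠ 0 := by nlinarith
    have d1 : HasDerivAt (fun s : ℝ => 2*s/(1-s^2))
        ((2 * 1 * (1 - s ^ 2) - 2 * s * -(2 * s ^ (2 - 1))) / (1 - s ^ 2) ^ 2) s := by
      have := ((hasDerivAt_id s).const_mul 2).div ((hasDerivAt_pow 2 s).const_sub 1) hden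
      exact this.congr_deriv (by norm_num)
    have d2 : HasDerivAt (fun s : ℝ => Real.log (1+s)) (1/(1+s)) s :=
      ((hasDerivAt_id s).const_add 1).log (by positivity)
    have d3 : HasDerivAt (fun s : ℝ => Real.log (1-s)) (-1/(1-s)) s :=
      by simpa using ((hasDerivAt_id s).const_sub 1).log (by positivity : (1:ℝ) - s ≠ 0)
    have := d1.sub (d2.sub d3)
    refine this.congr_deriv ?_
    field_simp
    ring
  have mono : StrictMonoOn u (Set.Ico 0 1) := by
    apply strictMonoOn_of_deriv_pos (convex_Ico 0 1)
    · exact fun s hs => (key s hs).continuousAt.continuousWithinAt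
    · intro s hs
      rw [interior_Ico] at hs
      rw [(key s ⟨hs.1.le, hs.2⟩).deriv]
      have h1 : (0:ℝ) < 1 - s^2 := by nlinarith [hs.1, hs.2]
      have h2 : (0:ℝ) < s := hs.1
      positivity
  have h0 : u 0 = 0 := by simp [hu]
  have := mono (by constructor <;> norm_num) (⟨ht0.le, ht1⟩ : t ∈ Set.Ico (0:ℝ) 1) ht0
  rw [h0] at this
  simp only [hu] at this
  linarith

lemma fk_log_bound {x : ℝ} (hx : 1 < x) :
    Real.log (x+1) - Real.log (x-1) < 2*x/(x^2-1) := by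
  have hx0 : (0:ℝ) < x := by linarith
  have ht0 : 0 < 1/x := by positivity
  have ht1 : 1/x < 1 := by rw [div_lt_one hx0]; exact hx
  have h := fk_artanh_bound ht0 ht1
  have e1 : Real.log (1 + 1/x) = Real.log (x+1) - Real.log x := by
    rw [← Real.log_div (by positivity) (by positivity)]
    congr 1; field_simp
  have e2 : Real.log (1 - 1/x) = Real.log (x-1) - Real.log x := by
    rw [← Real.log_div (by linarith) (by positivity)]
    congr 1; field_simp
  have e3 : 2*(1/x)/(1-(1/x)^2) = 2*x/(x^2-1) := by
    have : x^2 - 1 ≠ 0 := by nlinarith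
    field_simp
  rw [e1, e2, e3] at h
  linarith

lemma fk_F_anti : StrictAntiOn (fun x : ℝ => x * (Real.log (x+1) - Real.log (x-1))) (Set.Ioi 1) := by
  set F : ℝ → ℝ := fun x => x * (Real.log (x+1) - Real.log (x-1)) with hF
  have key : ∀ x ∈ Set.Ioi (1:ℝ), HasDerivAt F
      (1 * (Real.log (x+1) - Real.log (x-1)) + x * (1/(x+1) - 1/(x-1))) x := by
    intro x hx
    have hx1 : (1:ℝ) < x := hx
    have d2 : HasDerivAt (fun x : ℝ => Real.log (x+1)) (1/(x+1)) x := by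
      simpa using ((hasDerivAt_id x).add_const 1).log (by positivity : x + 1 ≠ 0)
    have d3 : HasDerivAt (fun x : ℝ => Real.log (x-1)) (1/(x-1)) x := by
      simpa using ((hasDerivAt_id x).sub_const 1).log (by intro h; nlinarith [h] : x - 1 ≠ 0)
    exact (hasDerivAt_id x).mul (d2.sub d3)
  apply strictAntiOn_of_deriv_neg (convex_Ioi 1)
  · exact fun x hx => (key x hx).continuousAt.continuousWithinAt
  · intro x hx
    rw [interior_Ioi] at hx
    rw [(key x hx).deriv]
    have hx1 : (1:ℝ) < x := hx
    have hb := fk_log_bound hx1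
    have e : x * (1/(x+1) - 1/(x-1)) = -(2*x/(x^2-1)) := by
      have h1 : x + 1 ≠ 0 := by positivity
      have h2 : x - 1 ≠ 0 := by intro h; nlinarith [h]
      have h3 : x^2 - 1 ≠ 0 := by nlinarith
      have h4 : (-1 + x^2) ≠ 0 := by nlinarith
      field_simp
      ring
    rw [e]
    linarith

lemma fk_deriv (k : ℝ) (hk : 1 < k) {ν : ℝ} (hν : 1 ≤ ν) :
    HasDerivAt (fun x : ℝ => (x + 1) ^ (k + 1) * (((k+1)/(k-1)) * x + 1) ^ (-k)
        - (x - 1) ^ (k + 1) * (((k+1)/(k-1)) * x - 1) ^ (-k))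
      (((k+1)/(k-1))*(ν-1)*((ν+1)^k*(((k+1)/(k-1))*ν+1)^(-k-1))
        - ((k+1)/(k-1))*(ν+1)*((ν-1)^k*(((k+1)/(k-1))*ν-1)^(-k-1))) ν := by
  set l : ℝ := (k+1)/(k-1) with hl
  have hk1 : (0:ℝ) < k - 1 := by linarith
  have hl1 : 1 < l := by rw [hl, lt_div_iff₀ hk1]; linarith
  have ha : (0:ℝ) < ν + 1 := by linarith
  have hb : (0:ℝ) < l * ν + 1 := by nlinarith
  have hc : (0:ℝ) ≤ ν - 1 := by linarith
  have hd : (0:ℝ) < l * ν - 1 := by nlinarith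
  have da : HasDerivAt (fun x : ℝ => (x + 1) ^ (k+1)) (1*(k+1)*(ν+1)^(k+1-1)) ν :=
    ((hasDerivAt_id ν).add_const 1).rpow_const (Or.inl ha.ne')
  have db : HasDerivAt (fun x : ℝ => (l * x + 1) ^ (-k)) ((l*1)*(-k)*(l*ν+1)^(-k-1)) ν :=
    (((hasDerivAt_id ν).const_mul l).add_const 1).rpow_const (Or.inl hb.ne')
  have dc : HasDerivAt (fun x : ℝ => (x - 1) ^ (k+1)) (1*(k+1)*(ν-1)^(k+1-1)) ν :=
    ((hasDerivAt_id ν).sub_const 1).rpow_const (Or.inr (by linarith))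
  have dd : HasDerivAt (fun x : ℝ => (l * x - 1) ^ (-k)) ((l*1)*(-k)*(l*ν-1)^(-k-1)) ν :=
    (((hasDerivAt_id ν).const_mul l).sub_const 1).rpow_const (Or.inl hd.ne')
  have := (da.mul db).sub (dc.mul dd)
  refine this.congr_deriv ?_
  have e1 : k + 1 - 1 = k := by ring
  rw [e1]
  have eb : (l*ν+1) ^ (-k) = (l*ν+1)^(-k-1) * (l*ν+1) := by
    rw [← Real.rpow_add_one hb.ne' (-k-1)]; norm_num
  have ed : (l*ν-1) ^ (-k) = (l*ν-1)^(-k-1) * (l*ν-1) := by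
    rw [← Real.rpow_add_one hd.ne' (-k-1)]; norm_num
  have ea : (ν+1) ^ (k+1) = (ν+1)^k * (ν+1) := by
    rw [← Real.rpow_add_one ha.ne' k]
  have ec : (ν-1) ^ (k+1) = (ν-1)^k * (ν-1) := by
    by_cases h : ν - 1 = 0
    · rw [h, Real.zero_rpow (by linarith), Real.zero_rpow (by linarith)]; ring
    · rw [← Real.rpow_add_one h k]
  rw [eb, ed, ea, ec]
  generalize (ν+1)^k = A
  generalize ((l*ν+1))^(-k-1) = B
  generalize (ν-1)^k = C
  generalize ((l*ν-1))^(-k-1) = D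
  rw [hl]
  field_simp
  ring

lemma fk_deriv_pos (k : ℝ) (hk : 1 < k) {ν : ℝ} (hν : 1 < ν) :
    0 < ((k+1)/(k-1))*(ν-1)*((ν+1)^k*(((k+1)/(k-1))*ν+1)^(-k-1))
        - ((k+1)/(k-1))*(ν+1)*((ν-1)^k*(((k+1)/(k-1))*ν-1)^(-k-1)) := by
  set l : ℝ := (k+1)/(k-1) with hl
  have hk1 : (0:ℝ) < k - 1 := by linarith
  have hl1 : 1 < l := by rw [hl, lt_div_iff₀ hk1]; linarith
  have hν0 : (0:ℝ) < ν := by linarith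
  have hlν : 1 < l * ν := by nlinarith
  have ha : (0:ℝ) < ν + 1 := by linarith
  have hb : (0:ℝ) < l * ν + 1 := by linarith
  have hc : (0:ℝ) < ν - 1 := by linarith
  have hd : (0:ℝ) < l * ν - 1 := by linarith
  -- key log inequality from strict antitonicity of F
  have hFF := fk_F_anti (mem_Ioi.mpr hν) (mem_Ioi.mpr hlν) (by nlinarith)
  simp only at hFF
  -- hFF : l*ν*(log (l*ν+1) - log (l*ν-1)) < ν*(log (ν+1) - log (ν-1))
  have hkey : (k+1)*(Real.log (l*ν+1) - Real.log (l*ν-1))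
      < (k-1)*(Real.log (ν+1) - Real.log (ν-1)) := by
    have h5 := mul_lt_mul_of_pos_left hFF hk1
    have hkl : (k-1)*l = k+1 := by rw [hl]; field_simp
    have h6 : ν * ((k+1)*(Real.log (l*ν+1) - Real.log (l*ν-1)))
        < ν * ((k-1)*(Real.log (ν+1) - Real.log (ν-1))) := by
      calc ν * ((k+1)*(Real.log (l*ν+1) - Real.log (l*ν-1)))
          = (k-1) * (l*ν*(Real.log (l*ν+1) - Real.log (l*ν-1))) := by rw [← hkl]; ring
        _ < (k-1) * (ν*(Real.log (ν+1) - Real.log (ν-1))) := h5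
        _ = ν * ((k-1)*(Real.log (ν+1) - Real.log (ν-1))) := by ring
    exact lt_of_mul_lt_mul_left h6 hν0.le
  -- turn into rpow inequality
  have hX : (ν-1)^(k-1)*((l*ν-1))^(-k-1) < (ν+1)^(k-1)*((l*ν+1))^(-k-1) := by
    rw [Real.rpow_def_of_pos hc, Real.rpow_def_of_pos hd,
      Real.rpow_def_of_pos ha, Real.rpow_def_of_pos hb, ← Real.exp_add, ← Real.exp_add]
    apply Real.exp_lt_exp.mpr
    nlinarith [hkey]
  have ea : (ν+1) ^ k = (ν+1)^(k-1) * (ν+1) := by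
    rw [← Real.rpow_add_one ha.ne' (k-1)]; norm_num
  have ec : (ν-1) ^ k = (ν-1)^(k-1) * (ν-1) := by
    rw [← Real.rpow_add_one hc.ne' (k-1)]; norm_num
  rw [ea, ec]
  have hl0 : 0 < l := by linarith
  have key2 : 0 < (l*(ν-1)*(ν+1)) * ((ν+1)^(k-1)*((l*ν+1))^(-k-1) - (ν-1)^(k-1)*((l*ν-1))^(-k-1)) := by
    apply mul_pos (by positivity)
    linarith
  calc (0:ℝ) < (l*(ν-1)*(ν+1)) * ((ν+1)^(k-1)*((l*ν+1))^(-k-1) - (ν-1)^(k-1)*((l*ν-1))^(-k-1)) := key2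
    _ = l*(ν-1)*((ν+1)^(k-1)*(ν+1)*((l*ν+1))^(-k-1)) - l*(ν+1)*((ν-1)^(k-1)*(ν-1)*((l*ν-1))^(-k-1)) := by ring

lemma fk_one (k : ℝ) (hk : 1 < k) :
    ((1:ℝ) + 1) ^ (k + 1) * (((k+1)/(k-1)) * 1 + 1) ^ (-k)
        - ((1:ℝ) - 1) ^ (k + 1) * (((k+1)/(k-1)) * 1 - 1) ^ (-k)
      = 2 * ((k - 1) / k) ^ k := by
  have hk1 : (0:ℝ) < k - 1 := by linarith
  have hk0 : (0:ℝ) < k := by linarith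
  have e0 : ((1:ℝ) - 1) ^ (k + 1) = 0 := by
    norm_num; exact Real.zero_rpow (by linarith)
  rw [e0, zero_mul, sub_zero]
  have e1 : ((k+1)/(k-1)) * 1 + 1 = 2*k/(k-1) := by field_simp; ring
  rw [e1]
  have e2 : (2*k/(k-1) : ℝ) ^ (-k) = ((k-1)/(2*k)) ^ k := by
    rw [Real.rpow_neg (by positivity), ← Real.inv_rpow (by positivity)]
    congr 1
    rw [inv_div]
  rw [e2]
  have e3 : ((k-1)/(2*k) : ℝ) = ((k-1)/k) * (1/2) := by rw [div_mul_div_comm]; ring_nf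
  rw [e3, Real.mul_rpow (by positivity) (by positivity)]
  have e4 : ((1:ℝ)+1) = 2 := by norm_num
  rw [e4, Real.rpow_add (by norm_num : (0:ℝ) < 2) k 1, Real.rpow_one]
  have e5 : (2:ℝ)^k * ((1/2:ℝ))^k = 1 := by
    rw [← Real.mul_rpow (by norm_num) (by norm_num)]
    norm_num
  calc 2^k * 2 * (((k-1)/k)^k * (1/2)^k)
      = (2^k * (1/2:ℝ)^k) * (2 * ((k-1)/k)^k) := by ring
    _ = 2 * ((k-1)/k)^k := by rw [e5, one_mul]


/-- The function `f_k(ν) = (ν+1)^{k+1}(λν+1)^{−k} − (ν−1)^{k+1}(λν−1)^{−k}`, with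
`λ = (k+1)/(k−1)` and real powers, is strictly increasing on `[1,∞)`; its minimum on
`[1,∞)` is attained at `ν = 1` with value `2((k−1)/k)^k`. -/
theorem f_k_strictMono (k : ℝ) (hk : 1 < k) (f : ℝ → ℝ)
    (hf : ∀ ν : ℝ, f ν =
      (ν + 1) ^ (k + 1) * (((k+1)/(k-1)) * ν + 1) ^ (-k)
        - (ν - 1) ^ (k + 1) * (((k+1)/(k-1)) * ν - 1) ^ (-k)) :
    StrictMonoOn f (Set.Ici 1) ∧
    (∀ ν ∈ Set.Ici (1:ℝ), f 1 ≤ f ν) ∧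
    f 1 = 2 * ((k - 1) / k) ^ k := by
  have hfe : f = fun x : ℝ => (x + 1) ^ (k + 1) * (((k+1)/(k-1)) * x + 1) ^ (-k)
        - (x - 1) ^ (k + 1) * (((k+1)/(k-1)) * x - 1) ^ (-k) := funext hf
  subst hfe
  have mono : StrictMonoOn (fun x : ℝ => (x + 1) ^ (k + 1) * (((k+1)/(k-1)) * x + 1) ^ (-k)
        - (x - 1) ^ (k + 1) * (((k+1)/(k-1)) * x - 1) ^ (-k)) (Set.Ici 1) := by
    apply strictMonoOn_of_deriv_pos (convex_Ici 1)
    · exact fun x hx => (fk_deriv k hk hx).continuousAt.continuousWithinAt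
    · intro x hx
      rw [interior_Ici] at hx
      rw [(fk_deriv k hk (le_of_lt hx)).deriv]
      exact fk_deriv_pos k hk hx
  refine ⟨mono, ?_, by simpa using fk_one k hk⟩
  intro ν hν
  rcases eq_or_lt_of_le (mem_Ici.mp hν) with h | h
  · rw [← h]
  · exact (mono (self_mem_Ici) hν h).le
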